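/- With the sequences k_i and b_i as defined by the algorithm (k₁=1, k₂=2, b₂(x)=frac(x/1) - 2·frac(x/2), k_{i+1} the least integer above k_i where b_i changes value, and b_{i+1}(x) = b_i(x) + (1+b_i(k_i))·(frac(x/k_i) - (k_{i+1}/k_i)·frac(x/k_{i+1}))): if k_{i+1} ≤ 2·k_i holds for all i ≥ 2, then b_i(x) = -1 for all real x ∈ [1, k_i). -/

import Mathlib

private lemma myfloor (x : ℝ) (n : ℕ) (hn : 0 < n) :
    ⌊(⌊x⌋ : ℝ) / n⌋ = ⌊x / n⌋ := by
  have hn' : (0:ℝ) < n := by exact_mod_cast hn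
  apply le_antisymm
  · exact Int.floor_le_floor (div_le_div_of_nonneg_right (Int.floor_le x) hn'.le)
  · rw [Int.le_floor, le_div_iff₀ hn']
    have h1 : (⌊x / n⌋ : ℝ) * n ≤ x := by
      rw [← le_div_iff₀ hn']; exact Int.floor_le _
    have h2 : ((⌊x / n⌋ * n : ℤ) : ℝ) ≤ x := by push_cast; exact h1
    have := Int.le_floor.mpr h2
    exact_mod_cast this

private lemma fract_shift (x : ℝ) (n : ℕ) (hn : 0 < n) :
    Int.fract (x / n) = (x - ⌊x⌋) / n + Int.fract ((⌊x⌋ : ℝ) / n) := by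
  rw [Int.fract, Int.fract, myfloor x n hn]
  ring

theorem stmt_6 (k : ℕ → ℕ) (b : ℕ → ℝ → ℝ)
    (hk1 : k 1 = 1) (hk2 : k 2 = 2)
    (hb2 : ∀ x : ℝ, b 2 x = Int.fract (x / 1) - 2 * Int.fract (x / 2))
    (hknext : ∀ i ≥ 2, k i < k (i + 1) ∧ b i (k (i + 1)) ≠ b i (k i) ∧
      ∀ m : ℕ, k i < m → m < k (i + 1) → b i m = b i (k i))
    (hbrec : ∀ i ≥ 2, ∀ x : ℝ, b (i + 1) x =
      b i x + (1 + b i (k i)) *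
        (Int.fract (x / (k i : ℝ)) - ((k (i + 1) : ℝ) / (k i : ℝ)) * Int.fract (x / (k (i + 1) : ℝ))))
    (hgap : ∀ i ≥ 2, k (i + 1) ≤ 2 * k i) :
    ∀ i ≥ 2, ∀ x : ℝ, 1 ≤ x → x < (k i : ℝ) → b i x = -1 := by
  -- k i ≥ 2 for i ≥ 2
  have hkpos : ∀ i ≥ 2, 2 ≤ k i := by
    intro i hi
    induction i, hi using Nat.le_induction with
    | base => omega
    | succ i hi ih => have := (hknext i hi).1; omega
  -- b i x depends only on ⌊x⌋
  have hA : ∀ i ≥ 2, ∀ x : ℝ, b i x = b i (⌊x⌋ : ℝ) := by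
    intro i hi
    induction i, hi using Nat.le_induction with
    | base =>
      intro x
      rw [hb2 x, hb2 (⌊x⌋ : ℝ)]
      have h1 := fract_shift x 1 (by norm_num)
      have h2 := fract_shift x 2 (by norm_num)
      push_cast at h1 h2
      rw [h1, h2]
      have : Int.fract ((⌊x⌋ : ℝ)) = Int.fract ((⌊x⌋ : ℝ) / 1) := by norm_num
      ring
    | succ i hi ih =>
      intro x
      have hki : 0 < k i := by have := hkpos i hi; omega
      have hki1 : 0 < k (i + 1) := by have := (hknext i hi).1; omega
      have hkir : (0:ℝ) < k i := by exact_mod_cast hki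
      have hki1r : (0:ℝ) < k (i+1) := by exact_mod_cast hki1
      rw [hbrec i hi x, hbrec i hi (⌊x⌋ : ℝ), ih x,
        fract_shift x (k i) hki, fract_shift x (k (i+1)) hki1]
      field_simp
      ring
  -- main claim for natural number arguments
  have hN : ∀ i ≥ 2, ∀ n : ℕ, 1 ≤ n → n < k i → b i (n : ℝ) = -1 := by
    intro i hi
    induction i, hi using Nat.le_induction with
    | base =>
      intro n h1 h2
      rw [hk2] at h2
      have hn : n = 1 := by omega
      subst hn
      rw [hb2]
      have e1 : Int.fract ((1:ℝ) / 1) = 0 := by norm_num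
      have e2 : Int.fract ((1:ℝ) / 2) = 1/2 := by
        rw [Int.fract_eq_self]; norm_num
      push_cast
      rw [e1, e2]; norm_num
    | succ i hi ih =>
      intro n h1 h2
      have hki : 0 < k i := by have := hkpos i hi; omega
      have hki1 : 0 < k (i + 1) := by have := (hknext i hi).1; omega
      have hkir : (0:ℝ) < k i := by exact_mod_cast hki
      have hki1r : (0:ℝ) < k (i+1) := by exact_mod_cast hki1
      rw [hbrec i hi]
      by_cases hcase : n < k i
      · -- n < k i : fracts are identities, bracket is 0
        rw [ih n h1 hcase]
        have e1 : Int.fract ((n:ℝ) / k i) = (n:ℝ) / k i := by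
          rw [Int.fract_eq_self]
          constructor
          · positivity
          · rw [div_lt_one hkir]; exact_mod_cast hcase
        have e2 : Int.fract ((n:ℝ) / k (i+1)) = (n:ℝ) / k (i+1) := by
          rw [Int.fract_eq_self]
          constructor
          · positivity
          · rw [div_lt_one hki1r]
            have : n < k (i+1) := h2
            exact_mod_cast this
        rw [e1, e2]
        field_simp
        ring
      · -- k i ≤ n < k (i+1) : b i n = b i (k i)
        push_neg at hcase
        have hb : b i (n : ℝ) = b i (k i : ℝ) := by
          rcases eq_or_lt_of_le hcase with h | h
          · rw [← h]
          · exact (hknext i hi).2.2 n h h2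
        have hub : (n:ℝ) < 2 * k i := by
          have := hgap i hi
          have : (n:ℝ) < (2 * k i : ℕ) := by exact_mod_cast lt_of_lt_of_le h2 this
          push_cast at this; linarith
        have e1 : Int.fract ((n:ℝ) / k i) = (n:ℝ) / k i - 1 := by
          have hf : ⌊(n:ℝ) / k i⌋ = 1 := by
            rw [Int.floor_eq_iff]
            constructor
            · push_cast
              rw [le_div_iff₀ hkir]
              have : (k i : ℝ) ≤ n := by exact_mod_cast hcase
              linarith
            · push_cast
              rw [div_lt_iff₀ hkir]
              linarith
          rw [Int.fract, hf]; push_cast; ring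
        have e2 : Int.fract ((n:ℝ) / k (i+1)) = (n:ℝ) / k (i+1) := by
          rw [Int.fract_eq_self]
          constructor
          · positivity
          · rw [div_lt_one hki1r]; exact_mod_cast h2
        rw [hb, e1, e2]
        have : ((k (i+1) : ℝ) / k i) * ((n:ℝ) / k (i+1)) = (n:ℝ) / k i := by
          field_simp
        rw [this]
        ring
  -- conclude for real x
  intro i hi x hx1 hx2
  rw [hA i hi x]
  have hfl1 : (1:ℤ) ≤ ⌊x⌋ := by exact_mod_cast Int.le_floor.mpr (by exact_mod_cast hx1)
  have hfl2 : ⌊x⌋ < (k i : ℤ) := Int.floor_lt.mpr (by exact_mod_cast hx2)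
  have hn : ((⌊x⌋.toNat : ℕ) : ℝ) = (⌊x⌋ : ℝ) := by
    have : (⌊x⌋.toNat : ℤ) = ⌊x⌋ := Int.toNat_of_nonneg (by omega)
    exact_mod_cast this
  rw [← hn]
  exact hN i hi ⌊x⌋.toNat (by omega) (by omega)
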